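/- Let C be an idempotent complete symmetric monoidal category, and let X, Y be objects of C. If the monoidal unit 𝟙 is a retract of X and the object X ⊗ Y is dualizable, then Y is dualizable. -/

import Mathlib

open CategoryTheory MonoidalCategory

namespace DualRetractAux

variable {C : Type*} [Category C] [MonoidalCategory C]

lemma exists_exactPairing_of_retract [IsIdempotentComplete C]
    {Z Y : C} (Zd : C) [ExactPairing Zd Z] (i : Y ⟶ Z) (r : Z ⟶ Y)
    (hir : i ≫ r = 𝟙 Y) : ∃ Yd : C, Nonempty (ExactPairing Yd Y) := by
  letI : HasLeftDual Z := ⟨Zd⟩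
  have hq : (r ≫ i) ≫ (r ≫ i) = r ≫ i := by
    rw [Category.assoc, ← Category.assoc i r, hir, Category.id_comp]
  have he : (leftAdjointMate (r ≫ i) : Zd ⟶ Zd) ≫ leftAdjointMate (r ≫ i)
      = leftAdjointMate (r ≫ i) := by
    rw [← comp_leftAdjointMate, hq]
  obtain ⟨W, s, p, hsp, hps⟩ := IsIdempotentComplete.idempotents_split Zd _ he
  have hmate : η_ Zd Z ≫ Zd ◁ (r ≫ i) = η_ Zd Z ≫ (p ≫ s) ▷ Z := by
    rw [hps]
    exact (coevaluation_comp_leftAdjointMate (r ≫ i)).symm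
  have hqr : Zd ◁ (r ≫ i) ≫ Zd ◁ r = Zd ◁ r := by
    rw [← MonoidalCategory.whiskerLeft_comp, Category.assoc, hir, Category.comp_id]
  have hp3 : (p ≫ s) ▷ Z ≫ p ▷ Z = p ▷ Z := by
    rw [← comp_whiskerRight, Category.assoc, hsp, Category.comp_id]
  refine ⟨W, ⟨⟨η_ Zd Z ≫ (p ⊗ₘ r), (i ⊗ₘ s) ≫ ε_ Zd Z, ?_, ?_⟩⟩⟩
  · calc
      Y ◁ (η_ Zd Z ≫ (p ⊗ₘ r)) ≫ (α_ Y W Y).inv ≫ ((i ⊗ₘ s) ≫ ε_ Zd Z) ▷ Y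
        = 𝟙 _ ⊗≫ (Y ◁ (η_ Zd Z ≫ p ▷ Z ≫ W ◁ r) ≫ i ▷ (W ⊗ Y)) ⊗≫
          (Z ◁ s) ▷ Y ⊗≫ ε_ Zd Z ▷ Y := by
        rw [tensorHom_def p r, tensorHom_def i s]; monoidal
      _ = 𝟙 _ ⊗≫ i ▷ 𝟙_ C ⊗≫ Z ◁ (η_ Zd Z ≫ p ▷ Z ≫ (W ◁ r ≫ s ▷ Y)) ⊗≫
          ε_ Zd Z ▷ Y := by
        rw [whisker_exchange]; monoidal
      _ = 𝟙 _ ⊗≫ i ▷ 𝟙_ C ⊗≫ Z ◁ ((η_ Zd Z ≫ (p ≫ s) ▷ Z) ≫ Zd ◁ r) ⊗≫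
          ε_ Zd Z ▷ Y := by
        rw [whisker_exchange, comp_whiskerRight]; monoidal
      _ = 𝟙 _ ⊗≫ i ▷ 𝟙_ C ⊗≫ Z ◁ (η_ Zd Z ≫ Zd ◁ (r ≫ i) ≫ Zd ◁ r) ⊗≫
          ε_ Zd Z ▷ Y := by
        rw [← hmate]; monoidal
      _ = 𝟙 _ ⊗≫ i ▷ 𝟙_ C ⊗≫ Z ◁ (η_ Zd Z ≫ Zd ◁ r) ⊗≫ ε_ Zd Z ▷ Y := by
        rw [hqr]
      _ = 𝟙 _ ⊗≫ i ▷ 𝟙_ C ⊗≫ Z ◁ η_ Zd Z ⊗≫ ((Z ⊗ Zd) ◁ r ≫ ε_ Zd Z ▷ Y) ⊗≫ 𝟙 _ := by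
        monoidal
      _ = 𝟙 _ ⊗≫ i ▷ 𝟙_ C ⊗≫ (Z ◁ η_ Zd Z ≫ (α_ Z Zd Z).inv ≫ ε_ Zd Z ▷ Z) ⊗≫
          𝟙_ C ◁ r ⊗≫ 𝟙 _ := by
        rw [whisker_exchange]; monoidal
      _ = 𝟙 _ ⊗≫ i ▷ 𝟙_ C ⊗≫ ((ρ_ Z).hom ≫ (λ_ Z).inv) ⊗≫ 𝟙_ C ◁ r ⊗≫ 𝟙 _ := by
        rw [ExactPairing.coevaluation_evaluation]
      _ = (ρ_ Y).hom ≫ (i ≫ r) ≫ (λ_ Y).inv := by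
        monoidal
      _ = (ρ_ Y).hom ≫ (λ_ Y).inv := by
        rw [hir, Category.id_comp]
  · calc
      (η_ Zd Z ≫ (p ⊗ₘ r)) ▷ W ≫ (α_ W Y W).hom ≫ W ◁ ((i ⊗ₘ s) ≫ ε_ Zd Z)
        = 𝟙 _ ⊗≫ η_ Zd Z ▷ W ⊗≫ ((p ▷ Z ≫ W ◁ (r ≫ i)) ▷ W) ⊗≫
          (W ⊗ Z) ◁ s ⊗≫ W ◁ ε_ Zd Z ⊗≫ 𝟙 _ := by
        rw [tensorHom_def p r, tensorHom_def i s, MonoidalCategory.whiskerLeft_comp]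
        monoidal
      _ = 𝟙 _ ⊗≫ ((η_ Zd Z ≫ Zd ◁ (r ≫ i)) ▷ W) ⊗≫ (p ▷ Z) ▷ W ⊗≫
          (W ⊗ Z) ◁ s ⊗≫ W ◁ ε_ Zd Z ⊗≫ 𝟙 _ := by
        rw [← whisker_exchange]; monoidal
      _ = 𝟙 _ ⊗≫ η_ Zd Z ▷ W ⊗≫ (((p ≫ s) ▷ Z ≫ p ▷ Z) ▷ W) ⊗≫
          (W ⊗ Z) ◁ s ⊗≫ W ◁ ε_ Zd Z ⊗≫ 𝟙 _ := by
        rw [hmate]; monoidal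
      _ = 𝟙 _ ⊗≫ η_ Zd Z ▷ W ⊗≫ ((p ▷ Z) ▷ W ≫ (W ⊗ Z) ◁ s) ⊗≫
          W ◁ ε_ Zd Z ⊗≫ 𝟙 _ := by
        rw [hp3]; monoidal
      _ = 𝟙 _ ⊗≫ (η_ Zd Z ▷ W ≫ (Zd ⊗ Z) ◁ s) ⊗≫ (p ▷ (Z ⊗ Zd) ≫ W ◁ ε_ Zd Z) ⊗≫
          𝟙 _ := by
        rw [← whisker_exchange]; monoidal
      _ = 𝟙 _ ⊗≫ (𝟙_ C ◁ s ≫ η_ Zd Z ▷ Zd) ⊗≫ (Zd ◁ ε_ Zd Z ≫ p ▷ 𝟙_ C) ⊗≫ 𝟙 _ := by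
        rw [← whisker_exchange, ← whisker_exchange]
      _ = 𝟙 _ ⊗≫ 𝟙_ C ◁ s ⊗≫ (η_ Zd Z ▷ Zd ≫ (α_ Zd Z Zd).hom ≫ Zd ◁ ε_ Zd Z) ⊗≫
          p ▷ 𝟙_ C ⊗≫ 𝟙 _ := by
        monoidal
      _ = 𝟙 _ ⊗≫ 𝟙_ C ◁ s ⊗≫ ((λ_ Zd).hom ≫ (ρ_ Zd).inv) ⊗≫ p ▷ 𝟙_ C ⊗≫ 𝟙 _ := by
        rw [ExactPairing.evaluation_coevaluation]
      _ = (λ_ W).hom ≫ (s ≫ p) ≫ (ρ_ W).inv := by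
        monoidal
      _ = (λ_ W).hom ≫ (ρ_ W).inv := by
        rw [hsp, Category.id_comp]

end DualRetractAux

/-- In an idempotent complete symmetric monoidal category, if the unit `𝟙` is a retract of
`X` and `X ⊗ Y` is dualizable, then `Y` is dualizable. -/
theorem dualizable_of_unit_retract {C : Type*} [Category C] [MonoidalCategory C]
    [SymmetricCategory C] [IsIdempotentComplete C]
    (X Y : C) (u : 𝟙_ C ⟶ X) (t : X ⟶ 𝟙_ C) (hut : u ≫ t = 𝟙 (𝟙_ C))
    (hXY : ∃ Zd : C, Nonempty (ExactPairing Zd (X ⊗ Y))) :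
    ∃ Yd : C, Nonempty (ExactPairing Yd Y) := by
  obtain ⟨Zd, ⟨hZ⟩⟩ := hXY
  letI := hZ
  refine DualRetractAux.exists_exactPairing_of_retract Zd
    ((λ_ Y).inv ≫ u ▷ Y) (t ▷ Y ≫ (λ_ Y).hom) ?_
  rw [Category.assoc, ← Category.assoc (u ▷ Y), ← comp_whiskerRight, hut]
  simp
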